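/- For every real λ with 0 < λ < 1 and reals β, β' with 0 ≤ β' ≤ 1, 0 ≤ β ≤ 1, and 0 ≤ (β - λβ')/(1-λ) ≤ 1, it holds that f^P(β,β',λ) ≤ 0, with equality if and only if β' = β. In particular, f^P(β,β,λ) = 0 for all 0 ≤ β ≤ 1. -/

import Mathlib

/-- Binary entropy function with natural logarithm (`Real.log 0 = 0` gives `H 0 = H 1 = 0`). -/
noncomputable def H (x : ℝ) : ℝ := -x * Real.log x - (1 - x) * Real.log (1 - x)

/-- Asymptotic input-output weight distribution of random puncturing with survival rate `lam`. -/
noncomputable def fP (β β' lam : ℝ) : ℝ :=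
  H β' + ((1 - lam) / lam) * H ((β - lam * β') / (1 - lam)) - (1 / lam) * H β

lemma H_eq (x : ℝ) : H x = Real.binEntropy x := by
  simp [H, Real.binEntropy, Real.log_inv]; ring

theorem stmt_5 (lam : ℝ) (hl0 : 0 < lam) (hl1 : lam < 1) :
    (∀ β β' : ℝ, 0 ≤ β' → β' ≤ 1 → 0 ≤ β → β ≤ 1 →
      0 ≤ (β - lam * β') / (1 - lam) → (β - lam * β') / (1 - lam) ≤ 1 →
      fP β β' lam ≤ 0 ∧ (fP β β' lam = 0 ↔ β' = β)) ∧
    (∀ β : ℝ, 0 ≤ β → β ≤ 1 → fP β β lam = 0) := by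
  have h1l : (0:ℝ) < 1 - lam := by linarith
  have hself : ∀ β : ℝ, fP β β lam = 0 := by
    intro β
    have hγ : (β - lam * β) / (1 - lam) = β := by
      field_simp
    simp only [fP, hγ]
    field_simp
    ring
  refine ⟨?_, fun β _ _ => hself β⟩
  intro β β' hb'0 hb'1 hb0 hb1 hg0 hg1
  set γ := (β - lam * β') / (1 - lam) with hγdef
  have hsum : lam * β' + (1 - lam) * γ = β := by
    rw [hγdef]; field_simp; ring
  by_cases heq : β' = β
  · subst heq
    exact ⟨le_of_eq (hself β'), by simp [hself β']⟩
  · have hne : β' ≠ γ := by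
      intro h
      apply heq
      have : β = β' := by rw [← hsum, ← h]; ring
      exact this.symm
    have hstrict := Real.strictConcave_binEntropy.2 ⟨hb'0, hb'1⟩ ⟨hg0, hg1⟩ hne hl0 h1l
      (by ring)
    simp only [smul_eq_mul] at hstrict
    rw [hsum] at hstrict
    have hlt : fP β β' lam < 0 := by
      have : lam * H β' + (1 - lam) * H γ < H β := by
        simpa [H_eq] using hstrict
      have hfp : fP β β' lam = (lam * H β' + (1 - lam) * H γ - H β) / lam := by
        simp only [fP]; field_simp; ring
      rw [hfp]
      exact div_neg_of_neg_of_pos (by linarith) hl0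
    exact ⟨hlt.le, by constructor <;> intro h <;> [linarith; exact absurd h heq]⟩
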